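/- If a propositional formula φ entails a propositional formula ψ, then there exists a propositional formula χ such that φ entails χ, χ entails ψ, and every propositional variable occurring in χ occurs both in φ and in ψ. -/

import Mathlib

inductive PropForm : Type where
  | var : ℕ → PropForm
  | tru : PropForm
  | fls : PropForm
  | neg : PropForm → PropForm
  | conj : PropForm → PropForm → PropForm
  | disj : PropForm → PropForm → PropForm
deriving DecidableEq

namespace PropForm

def eval (v : ℕ → Bool) : PropForm → Bool
  | var p => v p
  | tru => true
  | fls => false
  | neg φ => !(eval v φ)
  | conj φ ψ => eval v φ && eval v ψ
  | disj φ ψ => eval v φ || eval v ψ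

def sig : PropForm → Finset ℕ
  | var p => {p}
  | tru => ∅
  | fls => ∅
  | neg φ => sig φ
  | conj φ ψ => sig φ ∪ sig ψ
  | disj φ ψ => sig φ ∪ sig ψ

def impl (φ ψ : PropForm) : PropForm := disj (neg φ) ψ

def iff (φ ψ : PropForm) : PropForm := conj (impl φ ψ) (impl ψ φ)

end PropForm

/-- Semantic entailment: every model of `φ` is a model of `ψ`. -/
def Entails (φ ψ : PropForm) : Prop :=
  ∀ v : ℕ → Bool, φ.eval v = true → ψ.eval v = true

namespace PropForm

def substB (p : ℕ) (b : Bool) : PropForm → PropForm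
  | var q => if q = p then (if b then tru else fls) else var q
  | tru => tru
  | fls => fls
  | neg φ => neg (substB p b φ)
  | conj φ ψ => conj (substB p b φ) (substB p b ψ)
  | disj φ ψ => disj (substB p b φ) (substB p b ψ)

lemma eval_substB (v : ℕ → Bool) (p : ℕ) (b : Bool) (φ : PropForm) :
    (substB p b φ).eval v = φ.eval (Function.update v p b) := by
  induction φ with
  | var q =>
    by_cases hq : q = p <;> simp [substB, eval, hq, Function.update] <;> cases b <;> simp [eval]
  | tru => rfl
  | fls => rfl
  | neg φ ih => simp [substB, eval, ih]
  | conj φ ψ ih1 ih2 => simp [substB, eval, ih1, ih2]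
  | disj φ ψ ih1 ih2 => simp [substB, eval, ih1, ih2]

lemma sig_substB (p : ℕ) (b : Bool) (φ : PropForm) :
    (substB p b φ).sig ⊆ φ.sig \ {p} := by
  induction φ with
  | var q =>
    by_cases hq : q = p
    · cases b <;> simp [substB, hq, sig]
    · simp [substB, hq, sig, Finset.subset_iff]
  | tru => simp [substB, sig]
  | fls => simp [substB, sig]
  | neg φ ih => exact ih
  | conj φ ψ ih1 ih2 =>
    simp only [substB, sig]
    exact Finset.union_subset (ih1.trans (Finset.sdiff_subset_sdiff Finset.subset_union_left le_rfl))
      (ih2.trans (Finset.sdiff_subset_sdiff Finset.subset_union_right le_rfl))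
  | disj φ ψ ih1 ih2 =>
    simp only [substB, sig]
    exact Finset.union_subset (ih1.trans (Finset.sdiff_subset_sdiff Finset.subset_union_left le_rfl))
      (ih2.trans (Finset.sdiff_subset_sdiff Finset.subset_union_right le_rfl))

lemma eval_congr {v w : ℕ → Bool} (φ : PropForm) (h : ∀ q ∈ φ.sig, v q = w q) :
    φ.eval v = φ.eval w := by
  induction φ with
  | var q => exact h q (by simp [sig])
  | tru => rfl
  | fls => rfl
  | neg φ ih => simp [eval, ih h]
  | conj φ ψ ih1 ih2 =>
    simp only [eval]
    rw [ih1 fun q hq => h q (by simp [sig, hq]), ih2 fun q hq => h q (by simp [sig, hq])]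
  | disj φ ψ ih1 ih2 =>
    simp only [eval]
    rw [ih1 fun q hq => h q (by simp [sig, hq]), ih2 fun q hq => h q (by simp [sig, hq])]

def forget (p : ℕ) (φ : PropForm) : PropForm := disj (substB p true φ) (substB p false φ)

end PropForm

lemma entails_forget (p : ℕ) (φ : PropForm) : Entails φ (φ.forget p) := by
  intro v hv
  simp only [PropForm.forget, PropForm.eval, PropForm.eval_substB, Bool.or_eq_true]
  cases hb : v p
  · right
    rw [show Function.update v p false = v from funext fun q => by
      by_cases hq : q = p <;> simp [Function.update, hq, hb]]
    exact hv
  · left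
    rw [show Function.update v p true = v from funext fun q => by
      by_cases hq : q = p <;> simp [Function.update, hq, hb]]
    exact hv

lemma forget_entails {φ ψ : PropForm} (p : ℕ) (h : Entails φ ψ) (hp : p ∉ ψ.sig) :
    Entails (φ.forget p) ψ := by
  intro v hv
  simp only [PropForm.forget, PropForm.eval, PropForm.eval_substB, Bool.or_eq_true] at hv
  rcases hv with hv | hv
  · have := h _ hv
    rwa [PropForm.eval_congr ψ (v := Function.update v p true)
      (fun q hq => by rw [Function.update_of_ne (fun e => hp (by rwa [e] at hq))])] at this
  · have := h _ hv
    rwa [PropForm.eval_congr ψ (v := Function.update v p false)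
      (fun q hq => by rw [Function.update_of_ne (fun e => hp (by rwa [e] at hq))])] at this

lemma interp_aux (ψ : PropForm) (l : List ℕ) (hl : ∀ p ∈ l, p ∉ ψ.sig) :
    ∀ φ : PropForm, Entails φ ψ →
      ∃ χ : PropForm, Entails φ χ ∧ Entails χ ψ ∧ χ.sig ⊆ φ.sig \ l.toFinset := by
  induction l with
  | nil => intro φ h; exact ⟨φ, fun _ h => h, h, by simp⟩
  | cons p l ih =>
    intro φ h
    obtain ⟨χ, h1, h2, h3⟩ := ih (fun q hq => hl q (List.mem_cons_of_mem _ hq))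
      (φ.forget p) (forget_entails p h (hl p List.mem_cons_self))
    refine ⟨χ, fun v hv => h1 v (entails_forget p φ v hv), h2, ?_⟩
    intro q hq
    have hq' := h3 hq
    simp only [Finset.mem_sdiff, List.mem_toFinset] at hq' ⊢
    have hsig : q ∈ (φ.forget p).sig := hq'.1
    simp only [PropForm.forget, PropForm.sig, Finset.mem_union] at hsig
    have : q ∈ φ.sig ∧ q ≠ p := by
      rcases hsig with hs | hs <;>
        · have := PropForm.sig_substB _ _ _ hs
          simp only [Finset.mem_sdiff, Finset.mem_singleton] at this
          exact this
    refine ⟨this.1, ?_⟩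
    simp only [List.mem_cons, not_or]
    exact ⟨this.2, hq'.2⟩

/-- Craig Interpolation Property for classical propositional logic. -/
theorem craig_interpolation (φ ψ : PropForm) (h : Entails φ ψ) :
    ∃ χ : PropForm, Entails φ χ ∧ Entails χ ψ ∧ χ.sig ⊆ φ.sig ∩ ψ.sig := by
  obtain ⟨χ, h1, h2, h3⟩ := interp_aux ψ (φ.sig \ ψ.sig).toList
    (fun p hp => by simpa using (Finset.mem_sdiff.mp (Finset.mem_toList.mp hp)).2)
    φ h
  refine ⟨χ, h1, h2, fun q hq => ?_⟩
  have := h3 hq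
  simp only [Finset.mem_sdiff, List.mem_toFinset, Finset.mem_toList, Finset.mem_sdiff,
    not_and, not_not] at this
  exact Finset.mem_inter.mpr ⟨this.1, this.2 this.1⟩
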